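/- For real numbers 0 < m₂ < m₁ and δ₀ > 0, the two-dimensional Lebesgue measure of the set {(x,y) ∈ (0,δ₀]×(0,δ₀] : x^{m₁} < y < x^{m₂} and y < t/x} equals (1/(m₁+1) − 1/(m₂+1)) · t·ln(t) + O(t) as t → 0⁺. -/
import Mathlib


open MeasureTheory Set Filter

/-- For `0 < m₂ < m₁` and `δ₀ > 0`, the planar Lebesgue measure of
`{(x,y) ∈ (0,δ₀]×(0,δ₀] : x^{m₁} < y < x^{m₂}, y < t/x}` equals
`(1/(m₁+1) − 1/(m₂+1)) t ln t + O(t)` as `t → 0⁺`. -/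
theorem stmt_3 (m₁ m₂ δ₀ : ℝ) (hm₂ : 0 < m₂) (hm : m₂ < m₁) (hδ₀ : 0 < δ₀) :
    ∃ C > 0, ∀ᶠ t in nhdsWithin (0 : ℝ) (Set.Ioi 0),
      |(volume {p : ℝ × ℝ | p.1 ∈ Set.Ioc 0 δ₀ ∧ p.2 ∈ Set.Ioc 0 δ₀ ∧
            p.1 ^ m₁ < p.2 ∧ p.2 < p.1 ^ m₂ ∧ p.2 < t / p.1}).toReal
          - (1 / (m₁ + 1) - 1 / (m₂ + 1)) * (t * Real.log t)| ≤ C * t := by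
  have hm₁ : 0 < m₁ := hm₂.trans hm
  have hc₁ : (0:ℝ) < m₁ + 1 := by linarith
  have hc₂ : (0:ℝ) < m₂ + 1 := by linarith
  have hC : (0:ℝ) < 1 / (m₂ + 1) - 1 / (m₁ + 1) := by
    rw [sub_pos]
    exact one_div_lt_one_div_of_lt hc₂ (by linarith)
  refine ⟨1 / (m₂ + 1) - 1 / (m₁ + 1), hC, ?_⟩
  -- eventual smallness of b = t ^ (m₁+1)⁻¹
  have hε : (0:ℝ) < min 1 (min δ₀ (δ₀ ^ m₂⁻¹)) := by
    have : (0:ℝ) < δ₀ ^ m₂⁻¹ := Real.rpow_pos_of_pos hδ₀ _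
    simp [hδ₀, this]
  have htend : Tendsto (fun t : ℝ => t ^ (m₁ + 1)⁻¹) (nhdsWithin 0 (Set.Ioi 0)) (nhds 0) := by
    have := (Real.continuousAt_rpow_const 0 (m₁+1)⁻¹ (Or.inr (by positivity))).tendsto
    rw [Real.zero_rpow (by positivity)] at this
    exact this.mono_left nhdsWithin_le_nhds
  have hev : ∀ᶠ t in nhdsWithin (0:ℝ) (Set.Ioi 0),
      t ^ (m₁ + 1)⁻¹ < min 1 (min δ₀ (δ₀ ^ m₂⁻¹)) :=
    htend.eventually_lt_const hε
  filter_upwards [hev, self_mem_nhdsWithin] with t hb ht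
  rw [Set.mem_Ioi] at ht
  set a : ℝ := t ^ (m₂ + 1)⁻¹ with ha_def
  set b : ℝ := t ^ (m₁ + 1)⁻¹ with hb_def
  have ha_pos : 0 < a := Real.rpow_pos_of_pos ht _
  have hb_pos : 0 < b := Real.rpow_pos_of_pos ht _
  have hb1 : b < 1 := lt_of_lt_of_le hb (min_le_left _ _)
  have hbδ : b ≤ δ₀ := le_trans (le_of_lt hb) (le_trans (min_le_right _ _) (min_le_left _ _))
  have hbm : b ^ m₂ ≤ δ₀ := by
    have h1 : b ≤ δ₀ ^ m₂⁻¹ := le_trans (le_of_lt hb)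
      (le_trans (min_le_right _ _) (min_le_right _ _))
    calc b ^ m₂ ≤ (δ₀ ^ m₂⁻¹) ^ m₂ := Real.rpow_le_rpow hb_pos.le h1 hm₂.le
    _ = δ₀ := Real.rpow_inv_rpow hδ₀.le hm₂.ne'
  have ht1 : t < 1 := by
    by_contra h
    push_neg at h
    have : (1:ℝ) ≤ b := Real.one_le_rpow h (by positivity)
    linarith
  have hab : a ≤ b := Real.rpow_le_rpow_of_exponent_ge ht ht1.le
    (by simpa [one_div] using one_div_le_one_div_of_le hc₂ (by linarith : m₂ + 1 ≤ m₁ + 1))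
  have haB : a ^ (m₂ + 1) = t := Real.rpow_inv_rpow ht.le hc₂.ne'
  have hbB : b ^ (m₁ + 1) = t := Real.rpow_inv_rpow ht.le hc₁.ne'
  -- the region
  set f : ℝ → ℝ := fun x => x ^ m₁ with hf_def
  set g : ℝ → ℝ := fun x => min (x ^ m₂) (t / x) with hg_def
  have hset : {p : ℝ × ℝ | p.1 ∈ Set.Ioc 0 δ₀ ∧ p.2 ∈ Set.Ioc 0 δ₀ ∧
      p.1 ^ m₁ < p.2 ∧ p.2 < p.1 ^ m₂ ∧ p.2 < t / p.1} = regionBetween f g (Set.Ioo 0 b) := by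
    ext ⟨x, y⟩
    simp only [Set.mem_setOf_eq, regionBetween, Set.mem_Ioo, Set.mem_Ioc, hf_def, hg_def, lt_min_iff]
    constructor
    · rintro ⟨⟨hx0, hxδ⟩, ⟨hy0, hyδ⟩, h1, h2, h3⟩
      have hxb : x < b := by
        by_contra hxb
        push_neg at hxb
        have : t / x ≤ b ^ m₁ := by
          rw [div_le_iff₀ hx0]
          calc t = b ^ (m₁ + 1) := hbB.symm
          _ = b ^ m₁ * b := by rw [Real.rpow_add hb_pos, Real.rpow_one]
          _ ≤ b ^ m₁ * x := by
              exact mul_le_mul_of_nonneg_left hxb (Real.rpow_nonneg hb_pos.le _)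
        have : t / x ≤ x ^ m₁ :=
          this.trans (Real.rpow_le_rpow hb_pos.le hxb hm₁.le)
        linarith
      exact ⟨⟨hx0, hxb⟩, h1, h2, h3⟩
    · rintro ⟨⟨hx0, hxb⟩, h1, h2, h3⟩
      have hxm₁ : 0 < x ^ m₁ := Real.rpow_pos_of_pos hx0 _
      have hyδ : y < δ₀ := by
        calc y < x ^ m₂ := h2
        _ ≤ b ^ m₂ := Real.rpow_le_rpow hx0.le hxb.le hm₂.le
        _ ≤ δ₀ := hbm
      exact ⟨⟨hx0, (hxb.le.trans hbδ)⟩, ⟨by linarith, hyδ.le⟩, h1, h2, h3⟩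
  -- integrability
  have hmeas : MeasurableSet (Set.Ioo (0:ℝ) b) := measurableSet_Ioo
  have hf_int : IntegrableOn f (Set.Ioo 0 b) volume := by
    have := (intervalIntegral.intervalIntegrable_rpow' (a := 0) (b := b)
      (r := m₁) (by linarith)).1
    simpa [hf_def, integrableOn_Ioc_iff_integrableOn_Ioo] using this
  have hg2_int : IntegrableOn (fun x : ℝ => x ^ m₂) (Set.Ioo 0 b) volume := by
    have := (intervalIntegral.intervalIntegrable_rpow' (a := 0) (b := b)
      (r := m₂) (by linarith)).1
    simpa [integrableOn_Ioc_iff_integrableOn_Ioo] using this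
  have hg_meas : Measurable g := by
    apply Measurable.min
    · exact (Real.continuous_rpow_const hm₂.le).measurable
    · exact measurable_const.div measurable_id
  have hg_int : IntegrableOn g (Set.Ioo 0 b) volume := by
    apply Integrable.mono' hg2_int (hg_meas.aestronglyMeasurable)
    filter_upwards [ae_restrict_mem hmeas] with x hx
    have hx0 : 0 < x := hx.1
    rw [Real.norm_eq_abs, abs_le]
    constructor
    · have : 0 ≤ g x := le_min (Real.rpow_nonneg hx0.le _) (by positivity)
      have h2 : (0:ℝ) ≤ x ^ m₂ := Real.rpow_nonneg hx0.le _
      linarith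
    · exact min_le_left _ _
  have hfg : ∀ x ∈ Set.Ioo (0:ℝ) b, f x ≤ g x := by
    intro x hx
    have hx0 : 0 < x := hx.1
    refine le_min ?_ ?_
    · exact Real.rpow_le_rpow_of_exponent_ge hx0 (hx.2.trans_le hb1.le).le hm.le
    · rw [le_div_iff₀ hx0]
      calc x ^ m₁ * x = x ^ (m₁ + 1) := by rw [Real.rpow_add hx0, Real.rpow_one]
      _ ≤ b ^ (m₁ + 1) := Real.rpow_le_rpow hx0.le hx.2.le hc₁.le
      _ = t := hbB
  have hvol : volume {p : ℝ × ℝ | p.1 ∈ Set.Ioc 0 δ₀ ∧ p.2 ∈ Set.Ioc 0 δ₀ ∧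
      p.1 ^ m₁ < p.2 ∧ p.2 < p.1 ^ m₂ ∧ p.2 < t / p.1}
      = ENNReal.ofReal (∫ x in Set.Ioo 0 b, (g - f) x) := by
    rw [hset, Measure.volume_eq_prod ℝ ℝ]
    exact volume_regionBetween_eq_integral hf_int hg_int hmeas hfg
  -- compute the integral
  have hI : ∫ x in Set.Ioo 0 b, (g - f) x
      = (1 / (m₁ + 1) - 1 / (m₂ + 1)) * (t * Real.log t)
        + (1 / (m₂ + 1) - 1 / (m₁ + 1)) * t := by
    have h1 : ∫ x in Set.Ioo 0 b, (g - f) x = ∫ x in (0:ℝ)..b, (g - f) x := by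
      rw [intervalIntegral.integral_of_le hb_pos.le, MeasureTheory.integral_Ioc_eq_integral_Ioo]
    rw [h1]
    have hsplit : ∫ x in (0:ℝ)..b, (g - f) x
        = (∫ x in (0:ℝ)..a, (g - f) x) + ∫ x in a..b, (g - f) x := by
      rw [intervalIntegral.integral_add_adjacent_intervals]
      · apply IntervalIntegrable.mono_set ((intervalIntegrable_iff_integrableOn_Ioo_of_le hb_pos.le).mpr (hg_int.sub hf_int))
        rw [Set.uIcc_of_le ha_pos.le, Set.uIcc_of_le hb_pos.le]
        exact Set.Icc_subset_Icc le_rfl hab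
      · apply IntervalIntegrable.mono_set ((intervalIntegrable_iff_integrableOn_Ioo_of_le hb_pos.le).mpr (hg_int.sub hf_int))
        rw [Set.uIcc_of_le hab, Set.uIcc_of_le hb_pos.le]
        exact Set.Icc_subset_Icc ha_pos.le le_rfl
    rw [hsplit]
    have hI1 : ∫ x in (0:ℝ)..a, (g - f) x = ∫ x in (0:ℝ)..a, (x ^ m₂ - x ^ m₁) := by
      apply intervalIntegral.integral_congr
      intro x hx
      rw [Set.uIcc_of_le ha_pos.le] at hx
      simp only [Pi.sub_apply, hg_def, hf_def]
      congr 1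
      rcases eq_or_lt_of_le hx.1 with h | hx0
      · simp [← h, Real.zero_rpow hm₂.ne']
      · rw [min_eq_left]
        rw [le_div_iff₀ hx0]
        calc x ^ m₂ * x = x ^ (m₂ + 1) := by rw [Real.rpow_add hx0, Real.rpow_one]
        _ ≤ a ^ (m₂ + 1) := Real.rpow_le_rpow hx0.le hx.2 hc₂.le
        _ = t := haB
    have hI2 : ∫ x in a..b, (g - f) x = ∫ x in a..b, (t * (1/x) - x ^ m₁) := by
      apply intervalIntegral.integral_congr
      intro x hx
      rw [Set.uIcc_of_le hab] at hx
      have hx0 : 0 < x := ha_pos.trans_le hx.1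
      simp only [Pi.sub_apply, hg_def, hf_def]
      rw [mul_one_div]
      congr 1
      rw [min_eq_right]
      rw [div_le_iff₀ hx0]
      calc t = a ^ (m₂ + 1) := haB.symm
      _ ≤ x ^ (m₂ + 1) := Real.rpow_le_rpow ha_pos.le hx.1 hc₂.le
      _ = x ^ m₂ * x := by rw [Real.rpow_add hx0, Real.rpow_one]
    rw [hI1, hI2]
    have hz : (0:ℝ) ∉ Set.uIcc a b := by
      rw [Set.uIcc_of_le hab]
      intro h
      exact absurd h.1 (not_le.mpr ha_pos)
    have e1 : ∫ x in (0:ℝ)..a, x ^ m₂ = a ^ (m₂ + 1) / (m₂ + 1) := by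
      rw [integral_rpow (Or.inl (by linarith)), Real.zero_rpow hc₂.ne', sub_zero]
    have e2 : ∫ x in (0:ℝ)..a, x ^ m₁ = a ^ (m₁ + 1) / (m₁ + 1) := by
      rw [integral_rpow (Or.inl (by linarith)), Real.zero_rpow hc₁.ne', sub_zero]
    have e3 : ∫ x in a..b, x ^ m₁ = (b ^ (m₁+1) - a ^ (m₁+1)) / (m₁ + 1) :=
      integral_rpow (Or.inl (by linarith))
    have e4 : ∫ x in a..b, t * (1/x) = t * Real.log (b / a) := by
      rw [intervalIntegral.integral_const_mul, integral_one_div hz]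
    rw [intervalIntegral.integral_sub (intervalIntegral.intervalIntegrable_rpow' (by linarith))
        (intervalIntegral.intervalIntegrable_rpow' (by linarith)),
      intervalIntegral.integral_sub
        ((intervalIntegral.intervalIntegrable_one_div (fun x hx => fun h => hz (h ▸ hx))
          continuousOn_id).const_mul t)
        (intervalIntegral.intervalIntegrable_rpow (Or.inr hz)),
      e1, e2, e3, e4, haB, hbB]
    have hla : Real.log a = (m₂+1)⁻¹ * Real.log t := Real.log_rpow ht _
    have hlb : Real.log b = (m₁+1)⁻¹ * Real.log t := Real.log_rpow ht _
    rw [Real.log_div hb_pos.ne' ha_pos.ne', hla, hlb]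
    field_simp
    ring
  rw [hvol, hI, ENNReal.toReal_ofReal]
  · rw [add_sub_cancel_left, abs_of_nonneg (by positivity)]
  · have hlt : Real.log t < 0 := Real.log_neg ht ht1
    nlinarith [mul_nonneg hC.le (neg_nonneg.mpr (mul_nonpos_of_nonneg_of_nonpos ht.le hlt.le)),
      mul_nonneg hC.le ht.le]
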